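/- If κ > δ are regular cardinals and there exists a κ-Suslin tree with a δ-ascent path, then κ is not δ⁺-strongly compact. -/

import Mathlib

universe u

/-- An abstract tree: a strict order in which the set of predecessors of any node
is linearly ordered, together with a height (level) function. -/
structure PTree : Type (u + 1) where
  Node : Type u
  lt : Node → Node → Prop
  lt_trans : ∀ {a b c : Node}, lt a b → lt b c → lt a c
  ht : Node → Ordinal.{u}
  lt_ht : ∀ {a b : Node}, lt a b → ht a < ht b
  below_linear : ∀ {a b c : Node}, lt a c → lt b c → lt a b ∨ a = b ∨ lt b a

/-- `T` has height `κ`: all nodes live on levels `< κ` and every level `< κ` is nonempty. -/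
def PTree.HeightIs (T : PTree.{u}) (κ : Ordinal.{u}) : Prop :=
  (∀ x : T.Node, T.ht x < κ) ∧ ∀ α < κ, ∃ x : T.Node, T.ht x = α

def PTree.IsAntichainIn (T : PTree.{u}) (A : Set T.Node) : Prop :=
  ∀ a ∈ A, ∀ b ∈ A, a ≠ b → ¬ T.lt a b ∧ ¬ T.lt b a

def PTree.IsChainIn (T : PTree.{u}) (C : Set T.Node) : Prop :=
  ∀ a ∈ C, ∀ b ∈ C, a = b ∨ T.lt a b ∨ T.lt b a

/-- `T` is a `κ`-Suslin tree: it has height `κ` and every antichain and every chain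
has size `< κ`. -/
def PTree.IsSuslin (T : PTree.{u}) (κ : Cardinal.{u}) : Prop :=
  T.HeightIs κ.ord ∧ (∀ A : Set T.Node, T.IsAntichainIn A → Cardinal.mk A < κ) ∧
    ∀ C : Set T.Node, T.IsChainIn C → Cardinal.mk C < κ

/-- `f` is a `δ`-ascent path through the tree `T` of height `κ`:
`f α : δ → Lev_α(T)` and for `α < β < κ` the set of `υ < δ` with
`f α υ <_T f β υ` is co-bounded in `δ`. -/
def PTree.AscentPath (T : PTree.{u}) (κ δ : Ordinal.{u})
    (f : Ordinal.{u} → Ordinal.{u} → T.Node) : Prop :=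
  (∀ α < κ, ∀ υ < δ, T.ht (f α υ) = α) ∧
    ∀ α β : Ordinal.{u}, α < β → β < κ →
      ∃ θ < δ, ∀ υ : Ordinal.{u}, θ ≤ υ → υ < δ → T.lt (f α υ) (f β υ)

/-- `U` is `δ`-complete: it is closed under intersections of fewer than `δ` many sets. -/
def UFComplete {α : Type u} (δ : Cardinal.{u}) (U : Ultrafilter α) : Prop :=
  ∀ s : Set (Set α), Cardinal.mk s < δ → (∀ t ∈ s, t ∈ U) → ⋂₀ s ∈ U

/-- `U` is uniform: every member of `U` has full cardinality. -/
def UFUniform {α : Type u} (U : Ultrafilter α) : Prop :=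
  ∀ A ∈ U, Cardinal.mk A = Cardinal.mk α

/-- There is a `δ`-complete fine ultrafilter on `P_κ(θ)`; this is the ultrafilter form of
`(δ, θ)`-strong compactness of `κ` (an elementary `j : V → M` with `crit j ≥ δ` and a cover
`D ∈ M` of `j '' θ` with `|D| < j κ` in `M`). -/
def DeltaThetaCompact (δ κ θ : Cardinal.{u}) : Prop :=
  ∃ U : Ultrafilter {s : Set θ.out // Cardinal.mk s < κ},
    UFComplete δ U ∧ ∀ x : θ.out, {s : {s : Set θ.out // Cardinal.mk s < κ} | x ∈ s.1} ∈ U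

/-- `κ` is `δ`-strongly compact: it is `(δ, θ)`-strongly compact for every `θ ≥ κ`. -/
def IsDeltaStronglyCompact (δ κ : Cardinal.{u}) : Prop :=
  ∀ θ : Cardinal.{u}, κ ≤ θ → DeltaThetaCompact δ κ θ

/-- If `κ > δ` are regular cardinals and there exists a `κ`-Suslin tree with a
`δ`-ascent path, then `κ` is not `δ⁺`-strongly compact. -/
theorem not_succ_strongly_compact_of_suslin_ascent
    (κ δ : Cardinal.{u}) (hδκ : δ < κ) (hκ : κ.IsRegular) (hδ : δ.IsRegular)
    (htree : ∃ (T : PTree.{u}) (f : Ordinal.{u} → Ordinal.{u} → T.Node),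
      T.IsSuslin κ ∧ T.AscentPath κ.ord δ.ord f) :
    ¬ IsDeltaStronglyCompact (Order.succ δ) κ := by
  classical
  obtain ⟨T, f, hSus, hAsc⟩ := htree
  intro hsc
  obtain ⟨U, hcomp, hfine⟩ := hsc κ le_rfl
  -- ordinal coding of the toType's
  set oκ : κ.ord.ToType → Ordinal.{u} := fun t => (((Ordinal.ToType.mk (o := κ.ord))).symm t).1
    with hoκdef
  have hoκ : ∀ t, oκ t < κ.ord := fun t => (((Ordinal.ToType.mk (o := κ.ord))).symm t).2
  have hoκinj : Function.Injective oκ := by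
    intro a b hab
    have : ((Ordinal.ToType.mk (o := κ.ord))).symm a = ((Ordinal.ToType.mk (o := κ.ord))).symm b :=
      Subtype.ext hab
    exact ((Ordinal.ToType.mk (o := κ.ord))).symm.injective this
  set oδ : δ.ord.ToType → Ordinal.{u} := fun t => (((Ordinal.ToType.mk (o := δ.ord))).symm t).1
    with hoδdef
  have hoδ : ∀ t, oδ t < δ.ord := fun t => (((Ordinal.ToType.mk (o := δ.ord))).symm t).2
  have hδord0 : (0 : Ordinal.{u}) < δ.ord := by
    rw [← Cardinal.ord_zero]
    exact Cardinal.ord_lt_ord.mpr (Cardinal.aleph0_pos.trans_le hδ.aleph0_le)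
  have hκlim : Order.IsSuccLimit (κ.ord) := Cardinal.isSuccLimit_ord hκ.aleph0_le
  -- an equivalence between κ.out and κ.ord.ToType
  have hqex : Nonempty (κ.out ≃ κ.ord.ToType) := by
    apply Cardinal.eq.mp
    rw [Cardinal.mk_out, Cardinal.mk_toType, Cardinal.card_ord]
  obtain ⟨q⟩ := hqex
  -- bounding ordinal of a small set
  set β : {s : Set κ.out // Cardinal.mk s < κ} → Ordinal.{u} := fun s => ⨆ x : s.1, Order.succ (oκ (q x.1)) with hβdef
  have hβκ : ∀ s : {s : Set κ.out // Cardinal.mk s < κ}, β s < κ.ord := by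
    intro s
    exact Cardinal.iSup_lt_ord_of_isRegular hκ s.2 fun x => hκlim.succ_lt (hoκ _)
  have hβmem : ∀ (s : {s : Set κ.out // Cardinal.mk s < κ}) (x : κ.out), x ∈ s.1 → oκ (q x) < β s := by
    intro s x hx
    exact lt_of_lt_of_le (Order.lt_succ _)
      (Ordinal.le_iSup (fun x : s.1 => Order.succ (oκ (q x.1))) ⟨x, hx⟩)
  -- thresholds from the ascent path
  choose θf hθflt hθfasc using hAsc.2
  set θsel : Ordinal.{u} → {s : Set κ.out // Cardinal.mk s < κ} → Ordinal.{u} :=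
    fun α s => if h : α < β s then θf α (β s) h (hβκ s) else 0 with hθseldef
  have hθsellt : ∀ α s, θsel α s < δ.ord := by
    intro α s
    by_cases h : α < β s
    · rw [hθseldef]; simp only [dif_pos h]; exact hθflt _ _ _ _
    · rw [hθseldef]; simp only [dif_neg h]; exact hδord0
  -- by δ⁺-completeness, thresholds are bounded on a large set
  have Θex : ∀ α : Ordinal.{u}, ∃ Θ, Θ < δ.ord ∧ {s : {s : Set κ.out // Cardinal.mk s < κ} | θsel α s ≤ Θ} ∈ U := by
    intro α
    by_contra hno
    push_neg at hno
    have hcompl : ∀ d : δ.ord.ToType, {s : {s : Set κ.out // Cardinal.mk s < κ} | oδ d < θsel α s} ∈ U := by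
      intro d
      rcases U.mem_or_compl_mem {s : {s : Set κ.out // Cardinal.mk s < κ} | θsel α s ≤ oδ d} with h | h
      · exact absurd h (hno _ (hoδ d))
      · have : {s : {s : Set κ.out // Cardinal.mk s < κ} | θsel α s ≤ oδ d}ᶜ = {s : {s : Set κ.out // Cardinal.mk s < κ} | oδ d < θsel α s} := by
          ext s; simp [not_le]
        rwa [this] at h
    have hbig : ⋂₀ (Set.range fun d : δ.ord.ToType => {s : {s : Set κ.out // Cardinal.mk s < κ} | oδ d < θsel α s}) ∈ U := by
      apply hcomp
      · refine lt_of_le_of_lt Cardinal.mk_range_le ?_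
        rw [Cardinal.mk_toType, Cardinal.card_ord]
        exact Order.lt_succ δ
      · rintro t ⟨d, rfl⟩
        exact hcompl d
    obtain ⟨s, hs⟩ := Filter.nonempty_of_mem (Ultrafilter.mem_coe.mpr hbig)
    have hsd := hs _ ⟨(Ordinal.ToType.mk (o := δ.ord)) ⟨θsel α s, hθsellt α s⟩, rfl⟩
    simp only [Set.mem_setOf_eq, hoδdef, OrderIso.symm_apply_apply] at hsd
    exact absurd hsd (lt_irrefl _)
  choose Θ hΘlt hΘU using Θex
  -- pigeonhole: a κ-sized fiber
  set G : κ.ord.ToType → δ.ord.ToType :=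
    fun t => (Ordinal.ToType.mk (o := δ.ord)) ⟨Θ (oκ t), hΘlt _⟩ with hGdef
  have hfiber : ∃ d : δ.ord.ToType, ¬ Cardinal.mk {t // G t = d} < κ := by
    by_contra h
    push_neg at h
    have h1 : Cardinal.mk κ.ord.ToType < κ := by
      have he : Cardinal.mk κ.ord.ToType =
          Cardinal.sum (fun d : δ.ord.ToType => Cardinal.mk {t // G t = d}) := by
        rw [← Cardinal.mk_sigma]
        exact (Cardinal.mk_congr (Equiv.sigmaFiberEquiv G)).symm
      rw [he]
      refine Cardinal.sum_lt_of_isRegular hκ ?_ h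
      rw [Cardinal.mk_toType, Cardinal.card_ord]
      exact hδκ
    rw [Cardinal.mk_toType, Cardinal.card_ord] at h1
    exact absurd h1 (lt_irrefl _)
  obtain ⟨d0, hd0⟩ := hfiber
  have hd0' : κ ≤ Cardinal.mk {t // G t = d0} := le_of_not_gt hd0
  set υ : Ordinal.{u} := oδ d0 with hυdef
  have hυlt : υ < δ.ord := hoδ d0
  have hkey : ∀ t : κ.ord.ToType, G t = d0 → Θ (oκ t) = υ := by
    intro t ht
    have : (⟨Θ (oκ t), hΘlt _⟩ : Set.Iio δ.ord) = ((Ordinal.ToType.mk (o := δ.ord))).symm d0 := by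
      rw [← ht, hGdef]; simp
    rw [hυdef, hoδdef]
    exact congrArg Subtype.val this
  -- the chain
  set g : {t // G t = d0} → T.Node := fun t => f (oκ t.1) υ with hgdef
  have hginj : Function.Injective g := by
    intro t t' he
    have h1 : T.ht (g t) = oκ t.1 := hAsc.1 _ (hoκ _) _ hυlt
    have h2 : T.ht (g t') = oκ t'.1 := hAsc.1 _ (hoκ _) _ hυlt
    have : oκ t.1 = oκ t'.1 := by rw [← h1, ← h2, he]
    exact Subtype.ext (hoκinj this)
  have main : ∀ u u' : {t // G t = d0}, oκ u.1 < oκ u'.1 →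
      ∃ z, T.lt (g u) z ∧ T.lt (g u') z := by
    intro u u' hlt
    have hmem : ({s : {s : Set κ.out // Cardinal.mk s < κ} | q.symm u.1 ∈ s.1} ∩ {s : {s : Set κ.out // Cardinal.mk s < κ} | q.symm u'.1 ∈ s.1} ∩
        {s : {s : Set κ.out // Cardinal.mk s < κ} | θsel (oκ u.1) s ≤ Θ (oκ u.1)} ∩
        {s : {s : Set κ.out // Cardinal.mk s < κ} | θsel (oκ u'.1) s ≤ Θ (oκ u'.1)}) ∈ U :=
      Filter.inter_mem (Filter.inter_mem (Filter.inter_mem (Ultrafilter.mem_coe.mpr (hfine _)) (Ultrafilter.mem_coe.mpr (hfine _)))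
        (Ultrafilter.mem_coe.mpr (hΘU _))) (Ultrafilter.mem_coe.mpr (hΘU _))
    obtain ⟨s, hs⟩ := Filter.nonempty_of_mem (Ultrafilter.mem_coe.mpr hmem)
    obtain ⟨⟨⟨hs1, hs2⟩, hs3⟩, hs4⟩ := hs
    have hαβ : oκ u.1 < β s := by
      have := hβmem s _ hs1
      rwa [Equiv.apply_symm_apply] at this
    have hα'β : oκ u'.1 < β s := by
      have := hβmem s _ hs2
      rwa [Equiv.apply_symm_apply] at this
    have e1 : θsel (oκ u.1) s = θf (oκ u.1) (β s) hαβ (hβκ s) := dif_pos hαβ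
    have e2 : θsel (oκ u'.1) s = θf (oκ u'.1) (β s) hα'β (hβκ s) := dif_pos hα'β
    have hb1 : θf (oκ u.1) (β s) hαβ (hβκ s) ≤ υ := by
      rw [← e1, ← hkey u.1 u.2]; exact hs3
    have hb2 : θf (oκ u'.1) (β s) hα'β (hβκ s) ≤ υ := by
      rw [← e2, ← hkey u'.1 u'.2]; exact hs4
    exact ⟨f (β s) υ, hθfasc _ _ hαβ (hβκ s) υ hb1 hυlt,
      hθfasc _ _ hα'β (hβκ s) υ hb2 hυlt⟩
  have hchain : T.IsChainIn (Set.range g) := by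
    rintro a ⟨t, rfl⟩ b ⟨t', rfl⟩
    rcases lt_trichotomy (oκ t.1) (oκ t'.1) with hlt | heq | hgt
    · obtain ⟨z, l1, l2⟩ := main t t' hlt
      rcases T.below_linear l1 l2 with h | h | h
      exacts [Or.inr (Or.inl h), Or.inl h, Or.inr (Or.inr h)]
    · exact Or.inl (congrArg g (Subtype.ext (hoκinj heq)))
    · obtain ⟨z, l1, l2⟩ := main t' t hgt
      rcases T.below_linear l2 l1 with h | h | h
      exacts [Or.inr (Or.inl h), Or.inl h, Or.inr (Or.inr h)]
  have hlt := hSus.2.2 (Set.range g) hchain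
  have heq : Cardinal.mk (Set.range g) = Cardinal.mk {t // G t = d0} :=
    Cardinal.mk_range_eq g hginj
  rw [heq] at hlt
  exact absurd (lt_of_le_of_lt hd0' hlt) (lt_irrefl _)
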